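/- If θ is a nonempty skew diagram that is not a horizontal strip, then A(θ,p) = 0 for every integer p. -/

import Mathlib

/-- The south-east corners of a finite set of boxes: boxes `(i,j)` such that
neither `(i+1,j)` nor `(i,j+1)` belongs to the set. -/
def seCorners (θ : Finset (ℤ × ℤ)) : Finset (ℤ × ℤ) :=
  θ.filter fun b => (b.1 + 1, b.2) ∉ θ ∧ (b.1, b.2 + 1) ∉ θ

/-- `c(θ)`: the number of nonempty columns of `θ`. -/
def colCount (θ : Finset (ℤ × ℤ)) : ℕ := (θ.image Prod.snd).card

/-- `χ(φ,p) = 1` if `p ≤ c(φ)` and `0` otherwise. -/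
def chi (φ : Finset (ℤ × ℤ)) (p : ℤ) : ℤ := if p ≤ (colCount φ : ℤ) then 1 else 0

/-- `A(θ,p) = Σ_S (-1)^{|S|} χ(θ∖S, p)`, the sum over subsets `S` of the set of
south-east corners of `θ`. -/
def Acoef (θ : Finset (ℤ × ℤ)) (p : ℤ) : ℤ :=
  ∑ S ∈ (seCorners θ).powerset, (-1) ^ S.card * chi (θ \ S) p

/-- A partition in the `m × k` rectangle: a weakly decreasing sequence
`λ_1 ≥ … ≥ λ_m ≥ 0` of integers with `λ_1 ≤ k` (indexed by `1,…,m`). -/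
def IsRectPartition (m k : ℕ) (lam : ℤ → ℤ) : Prop :=
  (∀ i j : ℤ, 1 ≤ i → i ≤ j → j ≤ (m : ℤ) → lam j ≤ lam i) ∧
  (∀ i : ℤ, 1 ≤ i → i ≤ (m : ℤ) → 0 ≤ lam i) ∧ lam 1 ≤ (k : ℤ)

/-- The Young diagram `{(i,j) : 1 ≤ i ≤ m, 1 ≤ j ≤ λ_i}` of a partition in the
`m × k` rectangle. -/
noncomputable def youngD (m k : ℕ) (lam : ℤ → ℤ) : Finset (ℤ × ℤ) :=
  (Finset.Icc (1 : ℤ) (m : ℤ) ×ˢ Finset.Icc (1 : ℤ) (k : ℤ)).filter fun b => b.2 ≤ lam b.1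

/-- `θ` is a skew diagram in the `m × k` rectangle: `θ = ν/λ` for partitions
`λ ⊆ ν` in the `m × k` rectangle. -/
def IsSkewDiagram (m k : ℕ) (θ : Finset (ℤ × ℤ)) : Prop :=
  ∃ lam nu : ℤ → ℤ, IsRectPartition m k lam ∧ IsRectPartition m k nu ∧
    (∀ i : ℤ, 1 ≤ i → i ≤ (m : ℤ) → lam i ≤ nu i) ∧
    θ = youngD m k nu \ youngD m k lam

/-- A horizontal strip contains at most one box in each column. -/
def IsHorizontalStrip (θ : Finset (ℤ × ℤ)) : Prop :=
  ∀ b ∈ θ, ∀ b' ∈ θ, b.2 = b'.2 → b.1 = b'.1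

/-- If `θ` is a nonempty skew diagram that is not a horizontal strip, then
`A(θ,p) = 0` for every integer `p`. -/
theorem Acoef_eq_zero_of_not_horizontalStrip (m k : ℕ) (hm : 0 < m) (hk : 0 < k)
    (θ : Finset (ℤ × ℤ)) (hθ : IsSkewDiagram m k θ) (hne : θ.Nonempty)
    (hhs : ¬ IsHorizontalStrip θ) (p : ℤ) : Acoef θ p = 0 := by
  obtain ⟨lam, nu, hlam, hnu, hln, hθd⟩ := hθ
  -- membership characterization
  have hmem : ∀ i j : ℤ, (i, j) ∈ θ ↔
      (1 ≤ i ∧ i ≤ (m:ℤ)) ∧ (1 ≤ j ∧ j ≤ (k:ℤ)) ∧ lam i < j ∧ j ≤ nu i := by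
    intro i j
    rw [hθd]
    simp only [youngD, Finset.mem_sdiff, Finset.mem_filter, Finset.mem_product,
      Finset.mem_Icc, not_and, not_le]
    constructor
    · rintro ⟨⟨⟨⟨h1, h2⟩, h3, h4⟩, h5⟩, h6⟩
      exact ⟨⟨h1, h2⟩, ⟨h3, h4⟩, h6 ⟨⟨h1, h2⟩, h3, h4⟩, h5⟩
    · rintro ⟨⟨h1, h2⟩, ⟨h3, h4⟩, h5, h6⟩
      exact ⟨⟨⟨⟨h1, h2⟩, h3, h4⟩, h6⟩, fun _ => h5⟩
  -- skew step lemma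
  have hstep : ∀ i j : ℤ, (i - 1, j) ∈ θ → (i, j + 1) ∈ θ → (i - 1, j + 1) ∈ θ := by
    intro i j h1 h2
    rw [hmem] at h1 h2 ⊢
    obtain ⟨⟨a1, a2⟩, ⟨a3, a4⟩, a5, a6⟩ := h1
    obtain ⟨⟨b1, b2⟩, ⟨b3, b4⟩, b5, b6⟩ := h2
    have hmono := hnu.1 (i - 1) i a1 (by linarith) b2
    exact ⟨⟨a1, a2⟩, ⟨by linarith, b4⟩, by linarith, by linarith⟩
  -- the set of boxes with a box directly above
  classical
  set P : Finset (ℤ × ℤ) := θ.filter (fun x => (x.1 - 1, x.2) ∈ θ) with hP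
  have hPne : P.Nonempty := by
    rw [IsHorizontalStrip] at hhs
    push_neg at hhs
    obtain ⟨b, hb, b', hb', hcol, hrow⟩ := hhs
    rcases lt_trichotomy b.1 b'.1 with h | h | h
    · refine ⟨(b'.1, b'.2), Finset.mem_filter.mpr ⟨by simpa using hb', ?_⟩⟩
      have hb1 : (b.1, b.2) ∈ θ := by simpa using hb
      have hb2 : (b'.1, b'.2) ∈ θ := by simpa using hb'
      rw [hmem] at hb1 hb2 ⊢
      obtain ⟨⟨a1, a2⟩, ⟨a3, a4⟩, a5, a6⟩ := hb1
      obtain ⟨⟨c1, c2⟩, ⟨c3, c4⟩, c5, c6⟩ := hb2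
      have h1 := hlam.1 b.1 (b'.1 - 1) a1 (by linarith) (by linarith)
      have h2 := hnu.1 (b'.1 - 1) b'.1 (by linarith) (by linarith) c2
      rw [← hcol]
      exact ⟨⟨by linarith, by linarith⟩, ⟨a3, a4⟩, by linarith, by linarith⟩
    · exact absurd h hrow
    · refine ⟨(b.1, b.2), Finset.mem_filter.mpr ⟨by simpa using hb, ?_⟩⟩
      have hb1 : (b.1, b.2) ∈ θ := by simpa using hb
      have hb2 : (b'.1, b'.2) ∈ θ := by simpa using hb'
      rw [hmem] at hb1 hb2 ⊢
      obtain ⟨⟨a1, a2⟩, ⟨a3, a4⟩, a5, a6⟩ := hb1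
      obtain ⟨⟨c1, c2⟩, ⟨c3, c4⟩, c5, c6⟩ := hb2
      have h1 := hlam.1 b'.1 (b.1 - 1) c1 (by linarith) (by linarith)
      have h2 := hnu.1 (b.1 - 1) b.1 (by linarith) (by linarith) a2
      rw [hcol]
      exact ⟨⟨by linarith, by linarith⟩, ⟨c3, c4⟩, by linarith, by linarith⟩
  -- pick the max with respect to (col, row) lex, encoded by f
  obtain ⟨c, hcP, hmax⟩ := P.exists_max_image (fun x => x.2 * ((m:ℤ) + 1) + x.1) hPne
  obtain ⟨c1, c2⟩ := c
  have hcθ : (c1, c2) ∈ θ := (Finset.mem_filter.mp hcP).1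
  have hcab : (c1 - 1, c2) ∈ θ := (Finset.mem_filter.mp hcP).2
  -- bounds for elements of θ
  have hbound : ∀ x ∈ θ, 1 ≤ x.1 ∧ x.1 ≤ (m:ℤ) ∧ 1 ≤ x.2 ∧ x.2 ≤ (k:ℤ) := by
    rintro ⟨i, j⟩ hx
    rw [hmem] at hx
    exact ⟨hx.1.1, hx.1.2, hx.2.1.1, hx.2.1.2⟩
  -- c is an SE corner
  have hc1m : c1 ≤ (m:ℤ) := (hbound _ hcθ).2.1
  have hnoS : (c1 + 1, c2) ∉ θ := by
    intro hin
    have hPin : (c1 + 1, c2) ∈ P := by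
      refine Finset.mem_filter.mpr ⟨hin, ?_⟩
      simpa using hcθ
    have := hmax _ hPin
    simp only at this
    linarith
  have hnoE : (c1, c2 + 1) ∉ θ := by
    intro hin
    have h3 : (c1 - 1, c2 + 1) ∈ θ := hstep c1 c2 hcab hin
    have hPin : (c1, c2 + 1) ∈ P := Finset.mem_filter.mpr ⟨hin, h3⟩
    have := hmax _ hPin
    simp only at this
    have hc11 : 1 ≤ c1 := (hbound _ hcθ).1
    nlinarith
  have hcSE : (c1, c2) ∈ seCorners θ := by
    rw [seCorners, Finset.mem_filter]
    exact ⟨hcθ, hnoS, hnoE⟩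
  -- b is in the same column, in θ, and not an SE corner
  have hbnotSE : (c1 - 1, c2) ∉ seCorners θ := by
    rw [seCorners, Finset.mem_filter]
    rintro ⟨-, h1, -⟩
    exact h1 (by simpa using hcθ)
  -- removing c does not change the column count
  have hcolEq : ∀ S : Finset (ℤ × ℤ), S ⊆ (seCorners θ).erase (c1, c2) →
      colCount (θ \ insert (c1, c2) S) = colCount (θ \ S) := by
    intro S hS
    unfold colCount
    congr 1
    apply Finset.Subset.antisymm
    · exact Finset.image_subset_image (Finset.sdiff_subset_sdiff le_rfl
        (Finset.subset_insert _ _))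
    · intro j hj
      rw [Finset.mem_image] at hj ⊢
      obtain ⟨x, hx, hxj⟩ := hj
      rw [Finset.mem_sdiff] at hx
      by_cases hxc : x = (c1, c2)
      · refine ⟨(c1 - 1, c2), ?_, ?_⟩
        · rw [Finset.mem_sdiff]
          refine ⟨hcab, ?_⟩
          intro hmem'
          rcases Finset.mem_insert.mp hmem' with h | h
          · have : c1 - 1 = c1 := congrArg Prod.fst h
            linarith
          · exact hbnotSE (Finset.mem_of_mem_erase (hS h))
        · rw [← hxj, hxc]
      · exact ⟨x, Finset.mem_sdiff.mpr ⟨hx.1,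
          fun h => (Finset.mem_insert.mp h).elim hxc hx.2⟩, hxj⟩
  -- now the cancellation
  have hcne : (c1, c2) ∉ (seCorners θ).erase (c1, c2) := Finset.notMem_erase _ _
  have hSEeq : seCorners θ = insert (c1, c2) ((seCorners θ).erase (c1, c2)) :=
    (Finset.insert_erase hcSE).symm
  unfold Acoef
  rw [hSEeq, Finset.sum_powerset_insert hcne, ← Finset.sum_add_distrib]
  apply Finset.sum_eq_zero
  intro S hS
  rw [Finset.mem_powerset] at hS
  have hcS : (c1, c2) ∉ S := fun h => hcne (hS h)
  have hchi : chi (θ \ insert (c1, c2) S) p = chi (θ \ S) p := by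
    unfold chi
    rw [hcolEq S hS]
  rw [hchi, Finset.card_insert_of_notMem hcS, pow_succ]
  ring
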